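/- Under the assumptions of multi-logger bandit data with δ ∈ [0, L] and d_∞(h||h_j) ≤ M_j for all j, setting M_λ = max_j λ_j M_j, for any η > 0, with probability at least 1 − η: R(h) ≤ R̂_λ(h) + (2 L M_λ log(1/η))/3 + L √(2 Σ_{j=1}^J n_j λ_j^2 d_2(h||h_j; P) log(1/η)). -/

import Mathlib

open MeasureTheory ProbabilityTheory
open scoped NNReal ENNReal

private lemma two_mul_three_pow_le_factorial (n : ℕ) : 2 * 3 ^ n ≤ (n + 2).factorial := by
  induction n with
  | zero => simp [Nat.factorial]
  | succ n ih =>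
    have h1 : (n + 1 + 2).factorial = (n + 3) * (n + 2).factorial := rfl
    calc 2 * 3 ^ (n + 1) = 3 * (2 * 3 ^ n) := by ring
    _ ≤ 3 * (n + 2).factorial := Nat.mul_le_mul_left 3 ih
    _ ≤ (n + 3) * (n + 2).factorial := Nat.mul_le_mul_right _ (by omega)
    _ = (n + 1 + 2).factorial := h1.symm

private lemma exp_le_quad_of_nonneg {x : ℝ} (hx0 : 0 ≤ x) (hx3 : x < 3) :
    Real.exp x ≤ 1 + x + x ^ 2 / 2 * (1 - x / 3)⁻¹ := by
  have hsum : Summable fun n : ℕ => x ^ n / n.factorial := Real.summable_pow_div_factorial x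
  have hexp : Real.exp x = ∑' n : ℕ, x ^ n / n.factorial := by
    rw [Real.exp_eq_exp_ℝ, NormedSpace.exp_eq_tsum_div]
  have hr0 : 0 ≤ x / 3 := by linarith
  have hr1 : x / 3 < 1 := by linarith
  have hgeo : Summable fun n : ℕ => x ^ 2 / 2 * (x / 3) ^ n :=
    (summable_geometric_of_lt_one hr0 hr1).mul_left _
  have hterm : ∀ n : ℕ, x ^ (n + 2) / (n + 2).factorial ≤ x ^ 2 / 2 * (x / 3) ^ n := by
    intro n
    have h1 : (2 * 3 ^ n : ℝ) ≤ ((n + 2).factorial : ℝ) := by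
      exact_mod_cast two_mul_three_pow_le_factorial n
    have h2 : x ^ (n + 2) / ((n + 2).factorial : ℝ) ≤ x ^ (n + 2) / (2 * 3 ^ n) := by
      apply div_le_div_of_nonneg_left (pow_nonneg hx0 _) (by positivity) h1
    refine h2.trans_eq ?_
    rw [div_pow]
    field_simp
    ring
  have htail : ∑' n : ℕ, x ^ (n + 2) / (n + 2).factorial ≤ x ^ 2 / 2 * (1 - x / 3)⁻¹ := by
    calc ∑' n : ℕ, x ^ (n + 2) / (n + 2).factorial
        ≤ ∑' n : ℕ, x ^ 2 / 2 * (x / 3) ^ n :=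
          Summable.tsum_le_tsum hterm ((summable_nat_add_iff 2).2 hsum) hgeo
    _ = x ^ 2 / 2 * ∑' n : ℕ, (x / 3) ^ n := tsum_mul_left
    _ = x ^ 2 / 2 * (1 - x / 3)⁻¹ := by rw [tsum_geometric_of_lt_one hr0 hr1]
  have hsplit : (∑ i ∈ Finset.range 2, x ^ i / i.factorial) +
      ∑' n : ℕ, x ^ (n + 2) / (n + 2).factorial = ∑' n : ℕ, x ^ n / n.factorial :=
    Summable.sum_add_tsum_nat_add 2 hsum
  have h01 : (∑ i ∈ Finset.range 2, x ^ i / i.factorial) = 1 + x := by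
    simp [Finset.sum_range_succ, Nat.factorial]
  rw [hexp, ← hsplit, h01]
  linarith

private lemma exp_neg_le_quad {y : ℝ} (hy0 : 0 ≤ y) :
    (Real.exp y)⁻¹ ≤ 1 - y + y ^ 2 / 2 := by
  have h4 : (∑ i ∈ Finset.range 4, y ^ i / i.factorial) ≤ Real.exp y :=
    Real.sum_le_exp_of_nonneg hy0 4
  have hsum4 : (∑ i ∈ Finset.range 4, y ^ i / i.factorial) = 1 + y + y ^ 2 / 2 + y ^ 3 / 6 := by
    norm_num [Finset.sum_range_succ, Nat.factorial]
  rw [hsum4] at h4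
  have hq : (0:ℝ) < 1 - y + y ^ 2 / 2 := by nlinarith [sq_nonneg (y - 1)]
  rw [inv_le_iff_one_le_mul₀ (Real.exp_pos y)]
  nlinarith [mul_le_mul_of_nonneg_left h4 hq.le, pow_nonneg hy0 3, pow_nonneg hy0 4,
    pow_nonneg hy0 5]

private lemma exp_le_quad_of_nonpos {x : ℝ} (hx : x ≤ 0) :
    Real.exp x ≤ 1 + x + x ^ 2 / 2 := by
  have h := exp_neg_le_quad (y := -x) (by linarith)
  rw [← Real.exp_neg, neg_neg] at h
  calc Real.exp x ≤ 1 - (-x) + (-x) ^ 2 / 2 := h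
  _ = 1 + x + x ^ 2 / 2 := by ring

private lemma exp_le_quad {x c : ℝ} (hxc : x ≤ c) (hc0 : 0 ≤ c) (hc3 : c < 3) :
    Real.exp x ≤ 1 + x + x ^ 2 * (2 * (1 - c / 3))⁻¹ := by
  have hcpos : (0:ℝ) < 1 - c / 3 := by linarith
  have heq : x ^ 2 * (2 * (1 - c / 3))⁻¹ = x ^ 2 / 2 * (1 - c / 3)⁻¹ := by
    rw [mul_inv]; ring
  rcases le_or_gt x 0 with hx | hx
  · have h1 := exp_le_quad_of_nonpos hx
    have h2 : x ^ 2 / 2 ≤ x ^ 2 / 2 * (1 - c / 3)⁻¹ := by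
      nlinarith [sq_nonneg x, one_le_inv_iff₀.2 ⟨hcpos, by linarith⟩]
    rw [heq]; linarith
  · have h1 := exp_le_quad_of_nonneg hx.le (lt_of_le_of_lt hxc hc3)
    have hxpos : (0:ℝ) < 1 - x / 3 := by linarith [lt_of_le_of_lt hxc hc3]
    have h2 : (1 - x / 3)⁻¹ ≤ (1 - c / 3)⁻¹ := by
      apply inv_anti₀ hcpos (by linarith)
    have h3 : x ^ 2 / 2 * (1 - x / 3)⁻¹ ≤ x ^ 2 / 2 * (1 - c / 3)⁻¹ := by
      apply mul_le_mul_of_nonneg_left h2 (by positivity)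
    rw [heq]; linarith


private lemma mgf_bernstein {Ω : Type*} [MeasurableSpace Ω] (μ : Measure Ω)
    [IsProbabilityMeasure μ] (Y : Ω → ℝ) (hY : Measurable Y) (b t : ℝ) (hb0 : 0 ≤ b)
    (habs : ∀ ω, |Y ω| ≤ b) (hYb : ∀ ω, Y ω ≤ b)
    (hmean : ∫ ω, Y ω ∂μ = 0) (ht : 0 ≤ t) (htb3 : t * b < 3) :
    mgf Y μ t ≤ Real.exp (t ^ 2 * (∫ ω, (Y ω) ^ 2 ∂μ) * (2 * (1 - t * b / 3))⁻¹) := by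
  set K : ℝ := (2 * (1 - t * b / 3))⁻¹ with hK
  have hYint : Integrable Y μ :=
    Integrable.mono' (integrable_const b) hY.aestronglyMeasurable (ae_of_all _ habs)
  have hY2int : Integrable (fun ω => (Y ω) ^ 2) μ := by
    refine Integrable.mono' (integrable_const (b ^ 2))
      (hY.pow_const 2).aestronglyMeasurable (ae_of_all _ fun ω => ?_)
    rw [Real.norm_eq_abs, abs_pow]
    exact pow_le_pow_left₀ (abs_nonneg _) (habs ω) 2
  have hexpint : Integrable (fun ω => Real.exp (t * Y ω)) μ := by
    refine Integrable.mono' (integrable_const (Real.exp (t * b)))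
      ((hY.const_mul t).exp).aestronglyMeasurable (ae_of_all _ fun ω => ?_)
    rw [Real.norm_eq_abs, Real.abs_exp]
    exact Real.exp_le_exp.2 (mul_le_mul_of_nonneg_left (hYb ω) ht)
  have hpt : ∀ ω, Real.exp (t * Y ω) ≤ 1 + t * Y ω + (t * Y ω) ^ 2 * K := by
    intro ω
    exact exp_le_quad (mul_le_mul_of_nonneg_left (hYb ω) ht)
      (mul_nonneg ht hb0) htb3
  have hrhsint : Integrable (fun ω => 1 + t * Y ω + (t * Y ω) ^ 2 * K) μ := by
    have h1 : Integrable (fun ω => 1 + t * Y ω) μ := (integrable_const 1).add (hYint.const_mul t)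
    have h2 : Integrable (fun ω => (t * Y ω) ^ 2 * K) μ := by
      have := (hY2int.const_mul (t ^ 2)).mul_const K
      refine this.congr (ae_of_all _ fun ω => by ring)
    exact h1.add h2
  have hint_le : mgf Y μ t ≤ 1 + t ^ 2 * (∫ ω, (Y ω) ^ 2 ∂μ) * K := by
    rw [mgf]
    calc ∫ ω, Real.exp (t * Y ω) ∂μ ≤ ∫ ω, (1 + t * Y ω + (t * Y ω) ^ 2 * K) ∂μ :=
      integral_mono hexpint hrhsint hpt
    _ = 1 + t ^ 2 * (∫ ω, (Y ω) ^ 2 ∂μ) * K := by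
      have hre : (fun ω => 1 + t * Y ω + (t * Y ω) ^ 2 * K)
          = fun ω => (1 : ℝ) + (t * Y ω + (t ^ 2 * K) * (Y ω) ^ 2) := by
        funext ω; ring
      rw [hre, integral_add (integrable_const 1), integral_add (hYint.const_mul t)
        (hY2int.const_mul (t ^ 2 * K)), integral_const_mul, integral_const_mul, hmean,
        integral_const]
      · simp; ring
      · exact (hYint.const_mul t).add (hY2int.const_mul (t ^ 2 * K))
  calc mgf Y μ t ≤ 1 + t ^ 2 * (∫ ω, (Y ω) ^ 2 ∂μ) * K := hint_le
  _ ≤ Real.exp (t ^ 2 * (∫ ω, (Y ω) ^ 2 ∂μ) * K) := by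
    linarith [Real.add_one_le_exp (t ^ 2 * (∫ ω, (Y ω) ^ 2 ∂μ) * K)]

private lemma bernstein_sum {Ω ι : Type*} [MeasurableSpace Ω] [Fintype ι]
    (μ : Measure Ω) [IsProbabilityMeasure μ] (Xv : ι → Ω → ℝ)
    (hmeas : ∀ p, Measurable (Xv p))
    (hind : iIndepFun Xv μ)
    (b : ℝ) (hb : 0 ≤ b) (hbound : ∀ p ω, Xv p ω ∈ Set.Icc 0 b)
    (v : ι → ℝ) (hv : ∀ p, ∫ ω, (Xv p ω) ^ 2 ∂μ ≤ v p)
    (V : ℝ) (hV : ∑ p, v p ≤ V) (hVpos : 0 < V)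
    (ε : ℝ) (hε : 0 < ε) (u : ℝ) (hu : 0 < u)
    (hεu : 2 * u * (V + b * ε / 3) ≤ ε ^ 2) :
    (μ {ω | ε ≤ (∑ p, ∫ ω', Xv p ω' ∂μ) - ∑ p, Xv p ω}).toReal ≤ Real.exp (-u) := by
  classical
  set D : ℝ := V + b * ε / 3 with hD
  have hDpos : 0 < D := by
    have : 0 ≤ b * ε / 3 := by positivity
    rw [hD]; linarith
  set t : ℝ := ε / D with ht
  have htpos : 0 < t := div_pos hε hDpos
  have h1tb : 1 - t * b / 3 = V / D := by
    rw [ht]; field_simp; ring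
  have h1tbpos : 0 < 1 - t * b / 3 := by
    rw [h1tb]; positivity
  have htb3 : t * b < 3 := by nlinarith
  set K : ℝ := (2 * (1 - t * b / 3))⁻¹ with hKdef
  have hXint : ∀ p, Integrable (Xv p) μ := fun p => by
    refine Integrable.mono' (integrable_const b) (hmeas p).aestronglyMeasurable
      (ae_of_all _ fun ω => ?_)
    rw [Real.norm_eq_abs, abs_le]
    exact ⟨by linarith [(hbound p ω).1], (hbound p ω).2⟩
  have hX2int : ∀ p, Integrable (fun ω => (Xv p ω) ^ 2) μ := fun p => by
    refine Integrable.mono' (integrable_const (b ^ 2))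
      ((hmeas p).pow_const 2).aestronglyMeasurable (ae_of_all _ fun ω => ?_)
    rw [Real.norm_eq_abs, abs_pow, abs_of_nonneg (hbound p ω).1]
    exact pow_le_pow_left₀ (hbound p ω).1 (hbound p ω).2 2
  set c : ι → ℝ := fun p => ∫ ω, Xv p ω ∂μ with hc
  have hcmem : ∀ p, c p ∈ Set.Icc 0 b := fun p => by
    constructor
    · exact integral_nonneg fun ω => (hbound p ω).1
    · calc ∫ ω, Xv p ω ∂μ ≤ ∫ _ω, b ∂μ :=
        integral_mono (hXint p) (integrable_const b) fun ω => (hbound p ω).2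
      _ = b := by simp
  set Yv : ι → Ω → ℝ := fun p ω => c p - Xv p ω with hYv
  have hYmeas : ∀ p, Measurable (Yv p) := fun p => measurable_const.sub (hmeas p)
  have hYabs : ∀ p ω, |Yv p ω| ≤ b := fun p ω => by
    rw [abs_le]
    constructor
    · simp only [hYv]; linarith [(hcmem p).1, (hbound p ω).2]
    · simp only [hYv]; linarith [(hcmem p).2, (hbound p ω).1]
  have hYb : ∀ p ω, Yv p ω ≤ b := fun p ω => (abs_le.1 (hYabs p ω)).2
  have hYmean : ∀ p, ∫ ω, Yv p ω ∂μ = 0 := fun p => by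
    rw [hYv]
    simp only
    rw [integral_sub (integrable_const (c p)) (hXint p), integral_const]
    simp [hc]
  have hY2 : ∀ p, ∫ ω, (Yv p ω) ^ 2 ∂μ ≤ v p := fun p => by
    have hexpand : ∀ ω, (Yv p ω) ^ 2 = (Xv p ω) ^ 2 - (2 * c p) * Xv p ω + (c p) ^ 2 :=
      fun ω => by simp only [hYv]; ring
    have hmul : Integrable (fun ω => 2 * c p * Xv p ω) μ := (hXint p).const_mul _
    have hint1 : Integrable (fun ω => Xv p ω ^ 2 - 2 * c p * Xv p ω) μ :=
      (hX2int p).sub hmul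
    have h1 : ∫ ω, (Yv p ω) ^ 2 ∂μ
        = (∫ ω, (Xv p ω) ^ 2 ∂μ) - (2 * c p) * c p + (c p) ^ 2 := by
      rw [integral_congr_ae (ae_of_all _ hexpand),
        integral_add hint1 (integrable_const ((c p) ^ 2)),
        integral_sub (hX2int p) hmul, integral_const_mul,
        integral_const]
      simp [hc]
    rw [h1]
    nlinarith [hv p, sq_nonneg (c p)]
  have hYind : iIndepFun Yv μ := by
    have := hind.comp (fun p (x : ℝ) => c p - x) (fun p => measurable_const.sub measurable_id)
    exact this
  have hTb : ∀ ω, (∑ p, Yv p) ω ≤ (Fintype.card ι : ℝ) * b := fun ω => by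
    rw [Finset.sum_apply]
    calc ∑ p, Yv p ω ≤ ∑ _p : ι, b := Finset.sum_le_sum fun p _ => hYb p ω
    _ = (Fintype.card ι : ℝ) * b := by simp [Finset.card_univ, mul_comm]
  have hTmeas : Measurable (∑ p, Yv p) := by
    have hfe : (∑ p, Yv p) = fun ω => ∑ p, Yv p ω := by
      funext ω; simp [Finset.sum_apply]
    rw [hfe]
    exact Finset.measurable_sum _ fun p _ => hYmeas p
  have hexpint : Integrable (fun ω => Real.exp (t * (∑ p, Yv p) ω)) μ := by
    refine Integrable.mono' (integrable_const (Real.exp (t * ((Fintype.card ι : ℝ) * b))))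
      ((hTmeas.const_mul t).exp).aestronglyMeasurable (ae_of_all _ fun ω => ?_)
    rw [Real.norm_eq_abs, Real.abs_exp]
    exact Real.exp_le_exp.2 (mul_le_mul_of_nonneg_left (hTb ω) htpos.le)
  have hchern := measure_ge_le_exp_mul_mgf (μ := μ) (X := ∑ p, Yv p) ε htpos.le hexpint
  have hmgf_each : ∀ p, mgf (Yv p) μ t
      ≤ Real.exp (t ^ 2 * (∫ ω, (Yv p ω) ^ 2 ∂μ) * K) := fun p =>
    mgf_bernstein μ (Yv p) (hYmeas p) b t hb (hYabs p) (hYb p) (hYmean p) htpos.le htb3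
  have hmgfT : mgf (∑ p, Yv p) μ t ≤ Real.exp (t ^ 2 * V * K) := by
    rw [hYind.mgf_sum hYmeas]
    calc ∏ p, mgf (Yv p) μ t
        ≤ ∏ p, Real.exp (t ^ 2 * (∫ ω, (Yv p ω) ^ 2 ∂μ) * K) :=
          Finset.prod_le_prod (fun p _ => mgf_nonneg) (fun p _ => hmgf_each p)
    _ = Real.exp (∑ p, t ^ 2 * (∫ ω, (Yv p ω) ^ 2 ∂μ) * K) := by
          rw [Real.exp_sum]
    _ ≤ Real.exp (t ^ 2 * V * K) := by
          apply Real.exp_le_exp.2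
          have hK0 : 0 ≤ K := by
            rw [hKdef]
            positivity
          have hsum : ∑ p, t ^ 2 * (∫ ω, (Yv p ω) ^ 2 ∂μ) * K
              = t ^ 2 * (∑ p, ∫ ω, (Yv p ω) ^ 2 ∂μ) * K := by
            rw [← Finset.sum_mul, ← Finset.mul_sum]
          rw [hsum]
          have hle : (∑ p, ∫ ω, (Yv p ω) ^ 2 ∂μ) ≤ V :=
            le_trans (Finset.sum_le_sum fun p _ => hY2 p) hV
          exact mul_le_mul_of_nonneg_right
            (mul_le_mul_of_nonneg_left hle (sq_nonneg t)) hK0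
  have hKval : K = D / (2 * V) := by
    rw [hKdef, h1tb]
    field_simp
  have heq : t ^ 2 * V * K - t * ε = -(ε ^ 2 / (2 * D)) := by
    rw [hKval, ht]
    field_simp
    ring
  have hset : {ω | ε ≤ (∑ p, ∫ ω', Xv p ω' ∂μ) - ∑ p, Xv p ω}
      = {ω | ε ≤ (∑ p, Yv p) ω} := by
    ext ω
    simp only [Set.mem_setOf_eq, Finset.sum_apply, hYv, Finset.sum_sub_distrib, hc]
  rw [hset]
  calc (μ {ω | ε ≤ (∑ p, Yv p) ω}).toReal
      ≤ Real.exp (-t * ε) * mgf (∑ p, Yv p) μ t := hchern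
  _ ≤ Real.exp (-t * ε) * Real.exp (t ^ 2 * V * K) :=
      mul_le_mul_of_nonneg_left hmgfT (Real.exp_pos _).le
  _ = Real.exp (t ^ 2 * V * K - t * ε) := by rw [← Real.exp_add]; ring_nf
  _ ≤ Real.exp (-u) := by
      apply Real.exp_le_exp.2
      rw [heq, neg_le_neg_iff, le_div_iff₀ (by linarith : (0:ℝ) < 2 * D)]
      linarith

private lemma eps_ineq {a s V b u : ℝ} (ha : 0 ≤ a) (hs : 0 ≤ s)
    (h2 : s ^ 2 = 2 * V * u) (hab : a = 2 * b * u / 3) :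
    2 * u * (V + b * (a + s) / 3) ≤ (a + s) ^ 2 := by
  nlinarith [mul_nonneg ha hs]

set_option maxHeartbeats 2000000 in
/-- Generalization error bound for the λ-weighted IPS estimator (Theorem 1): with
probability at least `1 - η`,
`R(h) ≤ R̂_λ(h) + 2 L M_λ log(1/η) / 3 + L √(2 Σ_j n_j λ_j² d₂(h‖h_j; P) log(1/η))`,
where `M_λ ≥ λ_j M_j` for all `j`, `M_j` bounds `d_∞(h‖h_j)` (the sup of the ratio `h/h_j`),
and `d₂(h‖h_j; P) = ∫∫ h²/h_j · P`. -/
theorem lambda_weighted_generalization_bound {X Y Ω : Type*} [MeasurableSpace X]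
    [MeasurableSpace Y] [MeasurableSpace Ω]
    (μ : Measure X) (ν : Measure Y) [SigmaFinite μ] [SigmaFinite ν]
    (μΩ : Measure Ω) [IsProbabilityMeasure μΩ]
    (J : ℕ) (nvec : Fin J → ℕ)
    (lam : Fin J → ℝ) (hlam_nonneg : ∀ j, 0 ≤ lam j)
    (hlam_sum : ∑ j, lam j * (nvec j : ℝ) = 1)
    (Z : (j : Fin J) → Fin (nvec j) → Ω → X × Y)
    (Pd : X → ℝ) (h : X → Y → ℝ) (hj : Fin J → X → Y → ℝ) (δ : X × Y → ℝ)
    (L : ℝ) (M : Fin J → ℝ) (Mlam : ℝ) (η : ℝ) (hη : 0 < η)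
    (hP_nonneg : ∀ x, 0 ≤ Pd x) (hP_density : ∫ x, Pd x ∂μ = 1) (hP_meas : Measurable Pd)
    (hh_nonneg : ∀ x y, 0 ≤ h x y) (hh_density : ∀ x, ∫ y, h x y ∂ν = 1)
    (hh_meas : Measurable fun z : X × Y => h z.1 z.2)
    (hj_pos : ∀ j x y, 0 < hj j x y) (hj_density : ∀ j x, ∫ y, hj j x y ∂ν = 1)
    (hj_meas : ∀ j, Measurable fun z : X × Y => hj j z.1 z.2)
    (hδ : ∀ z, δ z ∈ Set.Icc (0 : ℝ) L) (hδ_meas : Measurable δ)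
    (hM : ∀ j x y, h x y / hj j x y ≤ M j)
    (hMlam : ∀ j, lam j * M j ≤ Mlam)
    (hZ_meas : ∀ j i, Measurable (Z j i))
    (hlaw : ∀ j i, Measure.map (Z j i) μΩ
      = (μ.prod ν).withDensity fun z => ENNReal.ofReal (hj j z.1 z.2 * Pd z.1))
    (hind : iIndepFun
      (fun p : (j : Fin J) × Fin (nvec j) => Z p.1 p.2) μΩ)
    (hd2_int : ∀ j, Integrable
      (fun z : X × Y => (h z.1 z.2) ^ 2 / hj j z.1 z.2 * Pd z.1) (μ.prod ν))
    (hR_int : Integrable (fun z : X × Y => δ z * h z.1 z.2 * Pd z.1) (μ.prod ν)) :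
    μΩ {ω | ∫ z : X × Y, δ z * h z.1 z.2 * Pd z.1 ∂(μ.prod ν)
        ≤ (∑ j, lam j *
            ∑ i, h (Z j i ω).1 (Z j i ω).2 / hj j (Z j i ω).1 (Z j i ω).2 * δ (Z j i ω))
          + 2 * L * Mlam * Real.log (1 / η) / 3
          + L * Real.sqrt (2 * (∑ j, (nvec j : ℝ) * (lam j) ^ 2 *
              ∫ z : X × Y, (h z.1 z.2) ^ 2 / hj j z.1 z.2 * Pd z.1 ∂(μ.prod ν))
              * Real.log (1 / η))}
      ≥ ENNReal.ofReal (1 - η) := by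
  classical
  rcases le_or_gt 1 η with hη1 | hη1
  · have h0 : ENNReal.ofReal (1 - η) = 0 := by
      rw [ENNReal.ofReal_eq_zero]; linarith
    rw [h0]; exact zero_le
  set Rv : ℝ := ∫ z : X × Y, δ z * h z.1 z.2 * Pd z.1 ∂(μ.prod ν) with hRv_def
  set u : ℝ := Real.log (1 / η) with hu_def
  set W : ℝ := ∑ j, (nvec j : ℝ) * (lam j) ^ 2 *
      ∫ z : X × Y, (h z.1 z.2) ^ 2 / hj j z.1 z.2 * Pd z.1 ∂(μ.prod ν) with hW_def
  have hu_pos : 0 < u := by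
    rw [hu_def]
    exact Real.log_pos (by rw [lt_div_iff₀ hη]; linarith)
  -- nonempty X and Y
  have hXne : Nonempty X := by
    by_contra hne
    rw [not_nonempty_iff] at hne
    rw [Subsingleton.elim μ 0, integral_zero_measure] at hP_density
    norm_num at hP_density
  obtain ⟨x0⟩ := hXne
  have hYne : Nonempty Y := by
    by_contra hne
    rw [not_nonempty_iff] at hne
    have := hh_density x0
    rw [Subsingleton.elim ν 0, integral_zero_measure] at this
    norm_num at this
  obtain ⟨y0⟩ := hYne
  have hL0 : 0 ≤ L := le_trans (hδ (x0, y0)).1 (hδ (x0, y0)).2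
  have hJpos : 0 < J := by
    by_contra hJ
    push_neg at hJ
    have hJ0 : J = 0 := by omega
    subst hJ0
    simp at hlam_sum
  have hM0 : ∀ j, 0 ≤ M j := fun j =>
    le_trans (div_nonneg (hh_nonneg x0 y0) (hj_pos j x0 y0).le) (hM j x0 y0)
  have hMlam0 : 0 ≤ Mlam :=
    le_trans (mul_nonneg (hlam_nonneg ⟨0, hJpos⟩) (hM0 ⟨0, hJpos⟩)) (hMlam ⟨0, hJpos⟩)
  have hSnn : ∀ ω, 0 ≤ ∑ j, lam j *
      ∑ i, h (Z j i ω).1 (Z j i ω).2 / hj j (Z j i ω).1 (Z j i ω).2 * δ (Z j i ω) := by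
    intro ω
    apply Finset.sum_nonneg
    intro j _
    apply mul_nonneg (hlam_nonneg j)
    apply Finset.sum_nonneg
    intro i _
    exact mul_nonneg (div_nonneg (hh_nonneg _ _) (hj_pos j _ _).le) (hδ _).1
  rcases le_or_gt Rv 0 with hRv0 | hRvpos
  · have hset : {ω | Rv ≤ (∑ j, lam j *
        ∑ i, h (Z j i ω).1 (Z j i ω).2 / hj j (Z j i ω).1 (Z j i ω).2 * δ (Z j i ω))
          + 2 * L * Mlam * u / 3 + L * Real.sqrt (2 * W * u)} = Set.univ := by
      apply Set.eq_univ_of_forall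
      intro ω
      simp only [Set.mem_setOf_eq]
      have h1 := hSnn ω
      have h2 : 0 ≤ 2 * L * Mlam * u / 3 := by positivity
      have h3 : 0 ≤ L * Real.sqrt (2 * W * u) := mul_nonneg hL0 (Real.sqrt_nonneg _)
      linarith
    rw [hset, measure_univ]
    exact ENNReal.ofReal_le_one.2 (by linarith)
  -- main case : Rv > 0
  have hLpos : 0 < L := by
    rcases hL0.eq_or_lt with hL | hL
    · exfalso
      have hz : ∀ z : X × Y, δ z = 0 := fun z => le_antisymm ((hδ z).2.trans hL.symm.le) (hδ z).1
      have : Rv = 0 := by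
        rw [hRv_def]
        have : (fun z : X × Y => δ z * h z.1 z.2 * Pd z.1) = fun _ => (0:ℝ) := by
          funext z; rw [hz z]; ring
        rw [this, integral_const]; simp
      linarith
    · exact hL
  -- positivity of the d2 integrals
  have hd2nn : ∀ j, 0 ≤ ∫ z : X × Y, (h z.1 z.2) ^ 2 / hj j z.1 z.2 * Pd z.1 ∂(μ.prod ν) :=
    fun j => integral_nonneg fun z =>
      mul_nonneg (div_nonneg (sq_nonneg _) (hj_pos j _ _).le) (hP_nonneg _)
  have hd2pos : ∀ j, 0 < ∫ z : X × Y, (h z.1 z.2) ^ 2 / hj j z.1 z.2 * Pd z.1 ∂(μ.prod ν) := by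
    intro j
    rcases (hd2nn j).eq_or_lt with hzero | hpos
    · exfalso
      have hae : (fun z : X × Y => (h z.1 z.2) ^ 2 / hj j z.1 z.2 * Pd z.1) =ᵐ[μ.prod ν] 0 := by
        refine (integral_eq_zero_iff_of_nonneg ?_ (hd2_int j)).1 hzero.symm
        exact fun z => mul_nonneg (div_nonneg (sq_nonneg _) (hj_pos j _ _).le) (hP_nonneg _)
      have hae2 : (fun z : X × Y => δ z * h z.1 z.2 * Pd z.1) =ᵐ[μ.prod ν] 0 := by
        refine hae.mono fun z hz => ?_
        simp only [Pi.zero_apply] at hz ⊢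
        rcases mul_eq_zero.1 hz with h1 | h2
        · rcases div_eq_zero_iff.1 h1 with h3 | h4
          · rw [pow_eq_zero_iff (two_ne_zero)] at h3
            rw [h3]; ring
          · exact absurd h4 (hj_pos j _ _).ne'
        · rw [h2]; ring
      have : Rv = 0 := by rw [hRv_def]; exact integral_eq_zero_of_ae hae2
      linarith
    · exact hpos
  have hex : ∃ j, 0 < lam j * (nvec j : ℝ) := by
    by_contra hno
    push_neg at hno
    have : ∑ j, lam j * (nvec j : ℝ) ≤ 0 := Finset.sum_nonpos fun j _ => hno j
    rw [hlam_sum] at this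
    linarith
  obtain ⟨j1, hj1⟩ := hex
  have hlj1 : 0 < lam j1 := by
    rcases (hlam_nonneg j1).eq_or_lt with hl | hl
    · exfalso; rw [← hl, zero_mul] at hj1; exact lt_irrefl _ hj1
    · exact hl
  have hnj1 : 0 < ((nvec j1 : ℕ) : ℝ) := by
    by_contra hn
    push_neg at hn
    nlinarith
  have hWpos : 0 < W := by
    rw [hW_def]
    refine Finset.sum_pos' (fun j _ => ?_) ⟨j1, Finset.mem_univ j1, ?_⟩
    · exact mul_nonneg (mul_nonneg (Nat.cast_nonneg _) (sq_nonneg _)) (hd2nn j)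
    · exact mul_pos (mul_pos hnj1 (pow_pos hlj1 2)) (hd2pos j1)
  -- the random variables
  set b : ℝ := L * Mlam with hb_def
  have hb0 : 0 ≤ b := mul_nonneg hL0 hMlam0
  set g : ((j : Fin J) × Fin (nvec j)) → X × Y → ℝ :=
    fun p z => lam p.1 * (h z.1 z.2 / hj p.1 z.1 z.2 * δ z) with hg_def
  have hgmeas : ∀ p, Measurable (g p) := fun p =>
    ((hh_meas.div (hj_meas p.1)).mul hδ_meas).const_mul _
  set Xv : ((j : Fin J) × Fin (nvec j)) → Ω → ℝ :=
    fun p ω => g p (Z p.1 p.2 ω) with hXv_def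
  have hXmeas : ∀ p, Measurable (Xv p) := fun p => (hgmeas p).comp (hZ_meas p.1 p.2)
  have hgbound : ∀ p z, g p z ∈ Set.Icc 0 b := by
    intro p z
    constructor
    · exact mul_nonneg (hlam_nonneg p.1)
        (mul_nonneg (div_nonneg (hh_nonneg _ _) (hj_pos p.1 _ _).le) (hδ z).1)
    · have h1 : h z.1 z.2 / hj p.1 z.1 z.2 * δ z ≤ M p.1 * L :=
        mul_le_mul (hM p.1 _ _) (hδ z).2 (hδ z).1
          (le_trans (div_nonneg (hh_nonneg _ _) (hj_pos p.1 _ _).le) (hM p.1 z.1 z.2))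
      have h2 : g p z ≤ lam p.1 * (M p.1 * L) :=
        mul_le_mul_of_nonneg_left h1 (hlam_nonneg p.1)
      have h3 : lam p.1 * (M p.1 * L) = (lam p.1 * M p.1) * L := by ring
      have h4 : (lam p.1 * M p.1) * L ≤ Mlam * L :=
        mul_le_mul_of_nonneg_right (hMlam p.1) hL0
      rw [hb_def]
      calc g p z ≤ (lam p.1 * M p.1) * L := by rw [← h3]; exact h2
      _ ≤ Mlam * L := h4
      _ = L * Mlam := mul_comm _ _
  have hbound : ∀ p ω, Xv p ω ∈ Set.Icc 0 b := fun p ω => hgbound p (Z p.1 p.2 ω)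
  have hXind : iIndepFun Xv μΩ :=
    hind.comp g hgmeas
  -- change of variables
  have hchange : ∀ (j : Fin J) (i : Fin (nvec j)) (f : X × Y → ℝ), Measurable f →
      ∫ ω, f (Z j i ω) ∂μΩ = ∫ z, f z * (hj j z.1 z.2 * Pd z.1) ∂(μ.prod ν) := by
    intro j i f hf
    rw [← integral_map (hZ_meas j i).aemeasurable hf.aestronglyMeasurable, hlaw j i]
    have hq : Measurable fun z : X × Y => Real.toNNReal (hj j z.1 z.2 * Pd z.1) :=
      ((hj_meas j).mul (hP_meas.comp measurable_fst)).real_toNNReal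
    rw [show (fun z : X × Y => ENNReal.ofReal (hj j z.1 z.2 * Pd z.1))
        = fun z : X × Y => ((Real.toNNReal (hj j z.1 z.2 * Pd z.1) : ℝ≥0) : ℝ≥0∞) from rfl]
    rw [integral_withDensity_eq_integral_smul hq]
    refine integral_congr_ae (ae_of_all _ fun z => ?_)
    have hge : 0 ≤ hj j z.1 z.2 * Pd z.1 := mul_nonneg (hj_pos j _ _).le (hP_nonneg _)
    have hsm : ((hj j z.1 z.2 * Pd z.1).toNNReal : ℝ≥0) • f z
        = f z * (hj j z.1 z.2 * Pd z.1) := by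
      rw [NNReal.smul_def, Real.coe_toNNReal _ hge, smul_eq_mul]; ring
    exact hsm
  have hEX : ∀ p : (j : Fin J) × Fin (nvec j), ∫ ω, Xv p ω ∂μΩ = lam p.1 * Rv := by
    intro p
    have h0 : ∫ ω, Xv p ω ∂μΩ = ∫ z, g p z * (hj p.1 z.1 z.2 * Pd z.1) ∂(μ.prod ν) :=
      hchange p.1 p.2 (g p) (hgmeas p)
    have hpt : ∀ z : X × Y, g p z * (hj p.1 z.1 z.2 * Pd z.1)
        = lam p.1 * (δ z * h z.1 z.2 * Pd z.1) := by
      intro z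
      have hne := (hj_pos p.1 z.1 z.2).ne'
      rw [hg_def]
      field_simp
    rw [h0, integral_congr_ae (ae_of_all _ hpt), integral_const_mul, hRv_def]
  have hsumEX : ∑ p : (j : Fin J) × Fin (nvec j), ∫ ω, Xv p ω ∂μΩ = Rv := by
    calc ∑ p : (j : Fin J) × Fin (nvec j), ∫ ω, Xv p ω ∂μΩ
        = ∑ p : (j : Fin J) × Fin (nvec j), lam p.1 * Rv :=
          Finset.sum_congr rfl fun p _ => hEX p
    _ = ∑ j, ∑ _i : Fin (nvec j), lam j * Rv := by
          rw [← Finset.univ_sigma_univ, Finset.sum_sigma]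
    _ = ∑ j, (nvec j : ℝ) * (lam j * Rv) := by
          refine Finset.sum_congr rfl fun j _ => ?_
          rw [Finset.sum_const, Finset.card_univ, Fintype.card_fin, nsmul_eq_mul]
    _ = (∑ j, lam j * (nvec j : ℝ)) * Rv := by
          rw [Finset.sum_mul]
          exact Finset.sum_congr rfl fun j _ => by ring
    _ = Rv := by rw [hlam_sum, one_mul]
  -- second moments
  set v : ((j : Fin J) × Fin (nvec j)) → ℝ := fun p => lam p.1 ^ 2 * L ^ 2 *
      ∫ z : X × Y, (h z.1 z.2) ^ 2 / hj p.1 z.1 z.2 * Pd z.1 ∂(μ.prod ν) with hv_def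
  have hv : ∀ p, ∫ ω, (Xv p ω) ^ 2 ∂μΩ ≤ v p := by
    intro p
    have h0 : ∫ ω, (Xv p ω) ^ 2 ∂μΩ
        = ∫ z, (g p z) ^ 2 * (hj p.1 z.1 z.2 * Pd z.1) ∂(μ.prod ν) :=
      hchange p.1 p.2 (fun z => (g p z) ^ 2) ((hgmeas p).pow_const 2)
    rw [h0, hv_def]
    calc ∫ z, (g p z) ^ 2 * (hj p.1 z.1 z.2 * Pd z.1) ∂(μ.prod ν)
        ≤ ∫ z, lam p.1 ^ 2 * L ^ 2 *
            ((h z.1 z.2) ^ 2 / hj p.1 z.1 z.2 * Pd z.1) ∂(μ.prod ν) := by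
          refine integral_mono_of_nonneg (ae_of_all _ fun z => ?_)
            ((hd2_int p.1).const_mul _) (ae_of_all _ fun z => ?_)
          · exact mul_nonneg (sq_nonneg _)
              (mul_nonneg (hj_pos p.1 _ _).le (hP_nonneg _))
          · have hne := (hj_pos p.1 z.1 z.2).ne'
            have heqz : (g p z) ^ 2 * (hj p.1 z.1 z.2 * Pd z.1)
                = lam p.1 ^ 2 * (δ z) ^ 2 *
                  ((h z.1 z.2) ^ 2 / hj p.1 z.1 z.2 * Pd z.1) := by
              rw [hg_def]
              field_simp
            refine le_of_eq heqz |>.trans ?_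
            have hQ0 : 0 ≤ (h z.1 z.2) ^ 2 / hj p.1 z.1 z.2 * Pd z.1 :=
              mul_nonneg (div_nonneg (sq_nonneg _) (hj_pos p.1 _ _).le) (hP_nonneg _)
            have hδ2 : (δ z) ^ 2 ≤ L ^ 2 := pow_le_pow_left₀ (hδ z).1 (hδ z).2 2
            nlinarith [mul_nonneg (mul_nonneg (sq_nonneg (lam p.1)) hQ0)
              (sub_nonneg.2 hδ2)]
    _ = lam p.1 ^ 2 * L ^ 2 *
          ∫ z : X × Y, (h z.1 z.2) ^ 2 / hj p.1 z.1 z.2 * Pd z.1 ∂(μ.prod ν) :=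
        integral_const_mul _ _
  have hVsum : ∑ p : (j : Fin J) × Fin (nvec j), v p ≤ L ^ 2 * W := by
    apply le_of_eq
    rw [hv_def]
    calc ∑ p : (j : Fin J) × Fin (nvec j), (fun p : (j : Fin J) × Fin (nvec j) =>
          lam p.1 ^ 2 * L ^ 2 *
          ∫ z : X × Y, (h z.1 z.2) ^ 2 / hj p.1 z.1 z.2 * Pd z.1 ∂(μ.prod ν)) p
        = ∑ j, ∑ _i : Fin (nvec j), lam j ^ 2 * L ^ 2 *
            ∫ z : X × Y, (h z.1 z.2) ^ 2 / hj j z.1 z.2 * Pd z.1 ∂(μ.prod ν) := by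
          rw [← Finset.univ_sigma_univ, Finset.sum_sigma]
    _ = L ^ 2 * W := by
          rw [hW_def, Finset.mul_sum]
          refine Finset.sum_congr rfl fun j _ => ?_
          rw [Finset.sum_const, Finset.card_univ, Fintype.card_fin, nsmul_eq_mul]
          ring
  have hVpos : 0 < L ^ 2 * W := mul_pos (pow_pos hLpos 2) hWpos
  -- epsilon
  set ε : ℝ := 2 * L * Mlam * u / 3 + L * Real.sqrt (2 * W * u) with hε_def
  have hs2 : Real.sqrt (2 * W * u) ^ 2 = 2 * W * u :=
    Real.sq_sqrt (by positivity)
  have hεpos : 0 < ε := by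
    rw [hε_def]
    have h1 : 0 ≤ 2 * L * Mlam * u / 3 := by positivity
    have h2 : 0 < L * Real.sqrt (2 * W * u) :=
      mul_pos hLpos (Real.sqrt_pos.2 (by positivity))
    linarith
  have hεu : 2 * u * (L ^ 2 * W + b * ε / 3) ≤ ε ^ 2 := by
    rw [hε_def]
    have ha0 : 0 ≤ 2 * L * Mlam * u / 3 := by positivity
    have hsn : 0 ≤ L * Real.sqrt (2 * W * u) := mul_nonneg hL0 (Real.sqrt_nonneg _)
    have hs2' : (L * Real.sqrt (2 * W * u)) ^ 2 = 2 * (L ^ 2 * W) * u := by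
      rw [mul_pow, hs2]; ring
    exact eps_ineq ha0 hsn hs2' (by rw [hb_def]; ring)
  -- apply the concentration bound
  have htail := bernstein_sum μΩ Xv hXmeas hXind b hb0 hbound v hv (L ^ 2 * W)
    hVsum hVpos ε hεpos u hu_pos hεu
  have hexpη : Real.exp (-u) = η := by
    rw [hu_def, one_div, Real.log_inv, neg_neg, Real.exp_log hη]
  have htail2 : μΩ {ω | ε ≤ (∑ p : (j : Fin J) × Fin (nvec j), ∫ ω', Xv p ω' ∂μΩ)
      - ∑ p : (j : Fin J) × Fin (nvec j), Xv p ω} ≤ ENNReal.ofReal η := by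
    rw [← ENNReal.ofReal_toReal (measure_ne_top μΩ _)]
    exact ENNReal.ofReal_le_ofReal (htail.trans_eq hexpη)
  -- relating the estimator sum to Xv
  have hSgoal : ∀ ω, (∑ j, lam j *
      ∑ i, h (Z j i ω).1 (Z j i ω).2 / hj j (Z j i ω).1 (Z j i ω).2 * δ (Z j i ω))
      = ∑ p : (j : Fin J) × Fin (nvec j), Xv p ω := by
    intro ω
    rw [← Finset.univ_sigma_univ, Finset.sum_sigma]
    refine Finset.sum_congr rfl fun j _ => ?_
    rw [Finset.mul_sum]
  -- measurability of the event
  have hFmeas : Measurable (fun ω => ∑ j, lam j *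
      ∑ i, h (Z j i ω).1 (Z j i ω).2 / hj j (Z j i ω).1 (Z j i ω).2 * δ (Z j i ω)) := by
    apply Finset.measurable_sum
    intro j _
    apply Measurable.const_mul
    apply Finset.measurable_sum
    intro i _
    exact ((hh_meas.div (hj_meas j)).mul hδ_meas).comp (hZ_meas j i)
  have hEmeas : MeasurableSet {ω | Rv ≤ (∑ j, lam j *
      ∑ i, h (Z j i ω).1 (Z j i ω).2 / hj j (Z j i ω).1 (Z j i ω).2 * δ (Z j i ω))
        + 2 * L * Mlam * u / 3 + L * Real.sqrt (2 * W * u)} :=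
    measurableSet_le measurable_const ((hFmeas.add_const _).add_const _)
  -- complement bound
  have hsub : {ω | Rv ≤ (∑ j, lam j *
      ∑ i, h (Z j i ω).1 (Z j i ω).2 / hj j (Z j i ω).1 (Z j i ω).2 * δ (Z j i ω))
        + 2 * L * Mlam * u / 3 + L * Real.sqrt (2 * W * u)}ᶜ
      ⊆ {ω | ε ≤ (∑ p : (j : Fin J) × Fin (nvec j), ∫ ω', Xv p ω' ∂μΩ)
          - ∑ p : (j : Fin J) × Fin (nvec j), Xv p ω} := by
    intro ω hω
    simp only [Set.mem_compl_iff, Set.mem_setOf_eq, not_le] at hω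
    simp only [Set.mem_setOf_eq]
    rw [hsumEX]
    rw [hSgoal ω] at hω
    rw [hε_def]
    linarith
  -- conclusion
  have hcompl : μΩ {ω | Rv ≤ (∑ j, lam j *
      ∑ i, h (Z j i ω).1 (Z j i ω).2 / hj j (Z j i ω).1 (Z j i ω).2 * δ (Z j i ω))
        + 2 * L * Mlam * u / 3 + L * Real.sqrt (2 * W * u)}ᶜ ≤ ENNReal.ofReal η :=
    le_trans (measure_mono hsub) htail2
  have hadd : μΩ {ω | Rv ≤ (∑ j, lam j *
      ∑ i, h (Z j i ω).1 (Z j i ω).2 / hj j (Z j i ω).1 (Z j i ω).2 * δ (Z j i ω))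
        + 2 * L * Mlam * u / 3 + L * Real.sqrt (2 * W * u)}
      + μΩ {ω | Rv ≤ (∑ j, lam j *
      ∑ i, h (Z j i ω).1 (Z j i ω).2 / hj j (Z j i ω).1 (Z j i ω).2 * δ (Z j i ω))
        + 2 * L * Mlam * u / 3 + L * Real.sqrt (2 * W * u)}ᶜ = 1 :=
    (measure_add_measure_compl hEmeas).trans measure_univ
  have h1 : ENNReal.ofReal (1 - η) = 1 - ENNReal.ofReal η := by
    rw [ENNReal.ofReal_sub _ hη.le, ENNReal.ofReal_one]
  rw [ge_iff_le, h1]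
  calc (1 : ℝ≥0∞) - ENNReal.ofReal η
      ≤ 1 - μΩ {ω | Rv ≤ (∑ j, lam j *
        ∑ i, h (Z j i ω).1 (Z j i ω).2 / hj j (Z j i ω).1 (Z j i ω).2 * δ (Z j i ω))
          + 2 * L * Mlam * u / 3 + L * Real.sqrt (2 * W * u)}ᶜ :=
        tsub_le_tsub_left hcompl 1
  _ = μΩ {ω | Rv ≤ (∑ j, lam j *
        ∑ i, h (Z j i ω).1 (Z j i ω).2 / hj j (Z j i ω).1 (Z j i ω).2 * δ (Z j i ω))
          + 2 * L * Mlam * u / 3 + L * Real.sqrt (2 * W * u)} := by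
      rw [← hadd, ENNReal.add_sub_cancel_right (measure_ne_top _ _)]
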